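/- Suppose z ∈ ℂ∖{0} is such that the nonnegative matrix series N1(|z|), G1(|z|) and R1(|z|) converge entrywise. Then G1(z) and R1(z) satisfy the matrix quadratic equations A_{*,−1}(z) + A_{*,0}(z)·G1(z) + A_{*,1}(z)·G1(z)² = G1(z) and R1(z)²·A_{*,−1}(z) + R1(z)·A_{*,0}(z) + A_{*,1}(z) = R1(z). -/

import Mathlib

namespace QBDSeries

/-- The index set `H = {-1, 0, 1}`. -/
def Hs : Finset ℤ := {-1, 0, 1}

/-- Partial sum of the first `k` entries of a sequence `σ : Fin n → ℤ`. -/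
def psum {n : ℕ} (σ : Fin n → ℤ) (k : ℕ) : ℤ :=
  ∑ i ∈ Finset.univ.filter (fun i : Fin n => (i : ℕ) < k), σ i

/-- Condition defining the index set `𝓘_n`. -/
def condQ (n : ℕ) (σ : Fin n → ℤ) : Prop :=
  (∀ k : ℕ, 1 ≤ k → k ≤ n - 1 → 0 ≤ psum σ k) ∧ psum σ n = 0

/-- Condition defining the index set `𝓘_{D,n}`. -/
def condD (n : ℕ) (σ : Fin n → ℤ) : Prop :=
  (∀ k : ℕ, 1 ≤ k → k ≤ n - 1 → 0 ≤ psum σ k) ∧ psum σ n = -1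

/-- Condition defining the index set `𝓘_{U,n}`. -/
def condU (n : ℕ) (σ : Fin n → ℤ) : Prop :=
  (∀ k : ℕ, 1 ≤ k → k ≤ n - 1 → 1 ≤ psum σ k) ∧ psum σ n = 1

/-- `A_{*,i}(z) = Σ_{j∈H} A_{j,i} z^j` over `ℂ`. -/
noncomputable def AstarC (s0 : ℕ) (A : ℤ → ℤ → Matrix (Fin s0) (Fin s0) ℝ) (z : ℂ) (i : ℤ) :
    Matrix (Fin s0) (Fin s0) ℂ :=
  ∑ j ∈ Hs, (z ^ j) • (A j i).map Complex.ofReal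

/-- `A_{*,i}(z) = Σ_{j∈H} A_{j,i} z^j` over `ℝ`. -/
noncomputable def AstarR (s0 : ℕ) (A : ℤ → ℤ → Matrix (Fin s0) (Fin s0) ℝ) (z : ℝ) (i : ℤ) :
    Matrix (Fin s0) (Fin s0) ℝ :=
  ∑ j ∈ Hs, (z ^ j) • A j i

open Classical in
/-- `Σ_{σ ∈ cond} A_{*,σ1}(z)⋯A_{*,σn}(z)` over `ℂ`. -/
noncomputable def pathSumC (s0 : ℕ) (A : ℤ → ℤ → Matrix (Fin s0) (Fin s0) ℝ) (z : ℂ) (n : ℕ)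
    (cond : (Fin n → ℤ) → Prop) : Matrix (Fin s0) (Fin s0) ℂ :=
  ∑ σ : Fin n → {x : ℤ // x ∈ Hs},
    if cond (fun k => (σ k : ℤ)) then (List.ofFn fun k : Fin n => AstarC s0 A z (σ k : ℤ)).prod
    else 0

open Classical in
/-- `Σ_{σ ∈ cond} A_{*,σ1}(z)⋯A_{*,σn}(z)` over `ℝ`. -/
noncomputable def pathSumR (s0 : ℕ) (A : ℤ → ℤ → Matrix (Fin s0) (Fin s0) ℝ) (z : ℝ) (n : ℕ)
    (cond : (Fin n → ℤ) → Prop) : Matrix (Fin s0) (Fin s0) ℝ :=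
  ∑ σ : Fin n → {x : ℤ // x ∈ Hs},
    if cond (fun k => (σ k : ℤ)) then (List.ofFn fun k : Fin n => AstarR s0 A z (σ k : ℤ)).prod
    else 0

/-- `Q^{(n)}(z)` (complex); `Q^{(0)}(z) = I`. -/
noncomputable def QmatC (s0 : ℕ) (A : ℤ → ℤ → Matrix (Fin s0) (Fin s0) ℝ) (z : ℂ) (n : ℕ) :
    Matrix (Fin s0) (Fin s0) ℂ := pathSumC s0 A z n (condQ n)

/-- `D^{(n)}(z)` (complex); it vanishes for `n = 0`. -/
noncomputable def DmatC (s0 : ℕ) (A : ℤ → ℤ → Matrix (Fin s0) (Fin s0) ℝ) (z : ℂ) (n : ℕ) :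
    Matrix (Fin s0) (Fin s0) ℂ := pathSumC s0 A z n (condD n)

/-- `U^{(n)}(z)` (complex); it vanishes for `n = 0`. -/
noncomputable def UmatC (s0 : ℕ) (A : ℤ → ℤ → Matrix (Fin s0) (Fin s0) ℝ) (z : ℂ) (n : ℕ) :
    Matrix (Fin s0) (Fin s0) ℂ := pathSumC s0 A z n (condU n)

/-- `Q^{(n)}(z)` (real). -/
noncomputable def QmatR (s0 : ℕ) (A : ℤ → ℤ → Matrix (Fin s0) (Fin s0) ℝ) (z : ℝ) (n : ℕ) :
    Matrix (Fin s0) (Fin s0) ℝ := pathSumR s0 A z n (condQ n)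

/-- `D^{(n)}(z)` (real). -/
noncomputable def DmatR (s0 : ℕ) (A : ℤ → ℤ → Matrix (Fin s0) (Fin s0) ℝ) (z : ℝ) (n : ℕ) :
    Matrix (Fin s0) (Fin s0) ℝ := pathSumR s0 A z n (condD n)

/-- `U^{(n)}(z)` (real). -/
noncomputable def UmatR (s0 : ℕ) (A : ℤ → ℤ → Matrix (Fin s0) (Fin s0) ℝ) (z : ℝ) (n : ℕ) :
    Matrix (Fin s0) (Fin s0) ℝ := pathSumR s0 A z n (condU n)

/-- `N1(z) = Σ_{n≥0} Q^{(n)}(z)`, entrywise (complex). -/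
noncomputable def N1C (s0 : ℕ) (A : ℤ → ℤ → Matrix (Fin s0) (Fin s0) ℝ) (z : ℂ) :
    Matrix (Fin s0) (Fin s0) ℂ := Matrix.of fun i j => ∑' n : ℕ, QmatC s0 A z n i j

/-- `G1(z) = Σ_{n≥1} D^{(n)}(z)`, entrywise (complex). -/
noncomputable def G1C (s0 : ℕ) (A : ℤ → ℤ → Matrix (Fin s0) (Fin s0) ℝ) (z : ℂ) :
    Matrix (Fin s0) (Fin s0) ℂ := Matrix.of fun i j => ∑' n : ℕ, DmatC s0 A z n i j

/-- `R1(z) = Σ_{n≥1} U^{(n)}(z)`, entrywise (complex). -/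
noncomputable def R1C (s0 : ℕ) (A : ℤ → ℤ → Matrix (Fin s0) (Fin s0) ℝ) (z : ℂ) :
    Matrix (Fin s0) (Fin s0) ℂ := Matrix.of fun i j => ∑' n : ℕ, UmatC s0 A z n i j

/-- `N1(z)` (real). -/
noncomputable def N1R (s0 : ℕ) (A : ℤ → ℤ → Matrix (Fin s0) (Fin s0) ℝ) (z : ℝ) :
    Matrix (Fin s0) (Fin s0) ℝ := Matrix.of fun i j => ∑' n : ℕ, QmatR s0 A z n i j

/-- `G1(z)` (real). -/
noncomputable def G1R (s0 : ℕ) (A : ℤ → ℤ → Matrix (Fin s0) (Fin s0) ℝ) (z : ℝ) :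
    Matrix (Fin s0) (Fin s0) ℝ := Matrix.of fun i j => ∑' n : ℕ, DmatR s0 A z n i j

/-- `R1(z)` (real). -/
noncomputable def R1R (s0 : ℕ) (A : ℤ → ℤ → Matrix (Fin s0) (Fin s0) ℝ) (z : ℝ) :
    Matrix (Fin s0) (Fin s0) ℝ := Matrix.of fun i j => ∑' n : ℕ, UmatR s0 A z n i j

/-- `C(z,w) = Σ_{i,j∈H} A_{i,j} z^i w^j` over `ℂ`. -/
noncomputable def CmatC (s0 : ℕ) (A : ℤ → ℤ → Matrix (Fin s0) (Fin s0) ℝ) (z w : ℂ) :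
    Matrix (Fin s0) (Fin s0) ℂ :=
  ∑ i ∈ Hs, ∑ j ∈ Hs, (z ^ i * w ^ j) • (A i j).map Complex.ofReal

/-- `H1(z) = A_{*,0}(z) + A_{*,1}(z) N1(z) A_{*,-1}(z)` (complex). -/
noncomputable def H1C (s0 : ℕ) (A : ℤ → ℤ → Matrix (Fin s0) (Fin s0) ℝ) (z : ℂ) :
    Matrix (Fin s0) (Fin s0) ℂ :=
  AstarC s0 A z 0 + AstarC s0 A z 1 * N1C s0 A z * AstarC s0 A z (-1)

/-- A matrix with row sums one and nonnegative entries. -/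
def IsStochastic {n : ℕ} (M : Matrix (Fin n) (Fin n) ℝ) : Prop :=
  (∀ i j, 0 ≤ M i j) ∧ ∀ i, ∑ j, M i j = 1


section gpsdef
variable {K : Type*} [Field K]

noncomputable def gAstar (s0 : ℕ) (M : ℤ → ℤ → Matrix (Fin s0) (Fin s0) K) (z : K) (i : ℤ) :
    Matrix (Fin s0) (Fin s0) K :=
  ∑ j ∈ Hs, (z ^ j) • M j i

open Classical in
noncomputable def gps (s0 : ℕ) (M : ℤ → ℤ → Matrix (Fin s0) (Fin s0) K) (z : K) (n : ℕ)
    (cond : (Fin n → ℤ) → Prop) : Matrix (Fin s0) (Fin s0) K :=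
  ∑ σ : Fin n → {x : ℤ // x ∈ Hs},
    if cond (fun k => (σ k : ℤ)) then (List.ofFn fun k : Fin n => gAstar s0 M z (σ k : ℤ)).prod
    else 0

end gpsdef

section auxmine
variable {K : Type*} [Field K] {s0 : ℕ}

lemma psum_eq_sum_ite {n : ℕ} (σ : Fin n → ℤ) (k : ℕ) :
    psum σ k = ∑ i : Fin n, if (i : ℕ) < k then σ i else 0 :=
  Finset.sum_filter _ _

lemma psum_zero {n : ℕ} (σ : Fin n → ℤ) : psum σ 0 = 0 := by
  simp [psum_eq_sum_ite]

lemma psum_ge {n : ℕ} (σ : Fin n → ℤ) {k : ℕ} (h : n ≤ k) : psum σ k = psum σ n := by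
  rw [psum_eq_sum_ite, psum_eq_sum_ite]
  refine Finset.sum_congr rfl fun i _ => ?_
  rw [if_pos (lt_of_lt_of_le i.isLt h), if_pos i.isLt]

lemma psum_succ {n : ℕ} (σ : Fin n → ℤ) {k : ℕ} (hk : k < n) :
    psum σ (k + 1) = psum σ k + σ ⟨k, hk⟩ := by
  rw [psum_eq_sum_ite, psum_eq_sum_ite]
  have : ∀ i : Fin n, (if (i : ℕ) < k + 1 then σ i else 0)
      = (if (i : ℕ) < k then σ i else 0) + (if i = ⟨k, hk⟩ then σ i else 0) := by
    intro i
    rcases lt_trichotomy (i : ℕ) k with h | h | h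
    · rw [if_pos (by omega), if_pos h, if_neg (by simp [Fin.ext_iff]; omega)]; ring
    · rw [if_pos (by omega), if_neg (by omega), if_pos (by simp [Fin.ext_iff, h])]; ring
    · rw [if_neg (by omega), if_neg (by omega), if_neg (by simp [Fin.ext_iff]; omega)]; ring
  rw [Finset.sum_congr rfl fun i _ => this i, Finset.sum_add_distrib,
    Finset.sum_ite_eq' Finset.univ ⟨k, hk⟩ σ, if_pos (Finset.mem_univ _)]

lemma psum_cons {n : ℕ} (i : ℤ) (τ : Fin n → ℤ) (k : ℕ) :
    psum (Fin.cons i τ) (k + 1) = i + psum τ k := by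
  rw [psum_eq_sum_ite, psum_eq_sum_ite, Fin.sum_univ_succ]
  simp only [Fin.cons_zero, Fin.cons_succ, Fin.val_zero, Fin.val_succ]
  rw [if_pos (by omega)]
  congr 1
  refine Finset.sum_congr rfl fun j _ => ?_
  by_cases h : (j : ℕ) < k
  · rw [if_pos (by omega), if_pos h]
  · rw [if_neg (by omega), if_neg h]

lemma psum_append_le {a b : ℕ} (τ1 : Fin a → ℤ) (τ2 : Fin b → ℤ) {k : ℕ} (hk : k ≤ a) :
    psum (Fin.append τ1 τ2) k = psum τ1 k := by
  rw [psum_eq_sum_ite, psum_eq_sum_ite, Fin.sum_univ_add]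
  have h2 : ∀ i : Fin b, (if ((Fin.natAdd a i : Fin (a+b)) : ℕ) < k
      then Fin.append τ1 τ2 (Fin.natAdd a i) else 0) = 0 := by
    intro i; rw [if_neg]; simp [Fin.natAdd]; omega
  rw [Finset.sum_congr rfl fun i _ => h2 i]
  simp [Fin.append_left]

lemma psum_append_ge {a b : ℕ} (τ1 : Fin a → ℤ) (τ2 : Fin b → ℤ) (m : ℕ) :
    psum (Fin.append τ1 τ2) (a + m) = psum τ1 a + psum τ2 m := by
  rw [psum_eq_sum_ite, psum_eq_sum_ite, psum_eq_sum_ite, Fin.sum_univ_add]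
  congr 1
  · refine Finset.sum_congr rfl fun i _ => ?_
    rw [if_pos (by simp [Fin.castAdd]; omega), if_pos i.isLt, Fin.append_left]
  · refine Finset.sum_congr rfl fun i _ => ?_
    simp only [Fin.coe_natAdd, Fin.append_right]
    by_cases h : (i : ℕ) < m
    · rw [if_pos (by omega), if_pos h]
    · rw [if_neg (by omega), if_neg h]


open Classical

lemma gps_congr {M : ℤ → ℤ → Matrix (Fin s0) (Fin s0) K} {z : K} {n : ℕ}
    {cond cond' : (Fin n → ℤ) → Prop} (h : ∀ σ, cond σ ↔ cond' σ) :
    gps s0 M z n cond = gps s0 M z n cond' :=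
  Finset.sum_congr rfl fun σ _ => if_congr (h _) rfl rfl

lemma gps_zero (M : ℤ → ℤ → Matrix (Fin s0) (Fin s0) K) (z : K)
    (cond : (Fin 0 → ℤ) → Prop) :
    gps s0 M z 0 cond = if cond (fun k => k.elim0) then 1 else 0 := by
  rw [gps, Fintype.sum_unique]
  have h1 : (fun k : Fin 0 => ((default : Fin 0 → {x : ℤ // x ∈ Hs}) k : ℤ))
      = (fun k : Fin 0 => k.elim0) := funext fun k => k.elim0
  rw [h1]
  simp

lemma gps_false {M : ℤ → ℤ → Matrix (Fin s0) (Fin s0) K} {z : K} {n : ℕ}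
    {cond : (Fin n → ℤ) → Prop} (h : ∀ σ, ¬ cond σ) :
    gps s0 M z n cond = 0 := by
  rw [gps]
  exact Finset.sum_eq_zero fun σ _ => if_neg (h _)

lemma sum_Hs_subtype {V : Type*} [AddCommMonoid V] (f : ℤ → V) :
    ∑ i : {x : ℤ // x ∈ Hs}, f (i : ℤ) = f (-1) + f 0 + f 1 := by
  rw [Finset.sum_coe_sort Hs f]
  show ∑ i ∈ ({-1, 0, 1} : Finset ℤ), f i = _
  rw [Finset.sum_insert (by decide), Finset.sum_insert (by decide), Finset.sum_singleton]
  abel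

lemma gps_succ (M : ℤ → ℤ → Matrix (Fin s0) (Fin s0) K) (z : K) (n : ℕ)
    (cond : (Fin (n+1) → ℤ) → Prop) :
    gps s0 M z (n+1) cond = ∑ i : {x : ℤ // x ∈ Hs},
      gAstar s0 M z (i : ℤ) * gps s0 M z n (fun τ => cond (Fin.cons (i : ℤ) τ)) := by
  rw [gps, ← Equiv.sum_comp (Fin.consEquiv (fun _ => {x : ℤ // x ∈ Hs})), Fintype.sum_prod_type]
  refine Finset.sum_congr rfl fun i _ => ?_
  rw [gps, Finset.mul_sum]
  refine Finset.sum_congr rfl fun τ _ => ?_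
  have heq : (Fin.consEquiv (fun _ => {x : ℤ // x ∈ Hs})) (i, τ) = Fin.cons i τ := rfl
  rw [heq]
  have hcoe : (fun k : Fin (n+1) => ((Fin.cons (α := fun _ => {x : ℤ // x ∈ Hs}) i τ k) : ℤ))
      = (Fin.cons (i : ℤ) (fun k => (τ k : ℤ)) : Fin (n+1) → ℤ) := by
    funext k
    induction k using Fin.cases with
    | zero => simp
    | succ j => simp
  have hli : (List.ofFn fun k : Fin (n+1) => gAstar s0 M z ((Fin.cons (α := fun _ => {x : ℤ // x ∈ Hs}) i τ k) : ℤ))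
      = gAstar s0 M z (i : ℤ) :: List.ofFn fun k : Fin n => gAstar s0 M z (τ k : ℤ) := by
    rw [List.ofFn_succ]
    simp
  rw [hcoe, hli, List.prod_cons]
  split <;> simp

def condDD (n : ℕ) (σ : Fin n → ℤ) : Prop :=
  (∀ k : ℕ, 1 ≤ k → k ≤ n - 1 → -1 ≤ psum σ k) ∧ psum σ n = -2

lemma condD_cons_zero {n : ℕ} (τ : Fin n → ℤ) :
    condD (n+1) (Fin.cons 0 τ) ↔ condD n τ := by
  constructor
  · rintro ⟨h1, h2⟩
    refine ⟨fun k hk1 hk2 => ?_, ?_⟩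
    · have := h1 (k+1) (by omega) (by omega)
      rwa [psum_cons, zero_add] at this
    · have := h2; rwa [psum_cons, zero_add] at this
  · rintro ⟨h1, h2⟩
    refine ⟨fun k hk1 hk2 => ?_, ?_⟩
    · obtain ⟨k', rfl⟩ : ∃ k', k = k' + 1 := ⟨k - 1, by omega⟩
      rw [psum_cons, zero_add]
      rcases Nat.eq_zero_or_pos k' with rfl | hk'
      · rw [psum_zero]
      · exact h1 k' (by omega) (by omega)
    · rw [psum_cons, zero_add]; exact h2

lemma condD_cons_one {n : ℕ} (τ : Fin n → ℤ) :
    condD (n+1) (Fin.cons 1 τ) ↔ condDD n τ := by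
  constructor
  · rintro ⟨h1, h2⟩
    refine ⟨fun k hk1 hk2 => ?_, ?_⟩
    · have := h1 (k+1) (by omega) (by omega)
      rw [psum_cons] at this; omega
    · have := h2; rw [psum_cons] at this; omega
  · rintro ⟨h1, h2⟩
    refine ⟨fun k hk1 hk2 => ?_, ?_⟩
    · obtain ⟨k', rfl⟩ : ∃ k', k = k' + 1 := ⟨k - 1, by omega⟩
      rw [psum_cons]
      rcases Nat.eq_zero_or_pos k' with rfl | hk'
      · rw [psum_zero]; omega
      · have := h1 k' (by omega) (by omega); omega
    · rw [psum_cons]; omega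

lemma condD_cons_negone {n : ℕ} (τ : Fin n → ℤ) :
    condD (n+1) (Fin.cons (-1) τ) ↔ n = 0 := by
  constructor
  · rintro ⟨h1, h2⟩
    by_contra hn
    have h3 := h1 1 le_rfl (by omega)
    have h4 := psum_cons (-1) τ 0
    rw [psum_zero] at h4
    rw [show (0:ℕ) + 1 = 1 from rfl] at h4
    omega
  · rintro rfl
    refine ⟨fun k hk1 hk2 => by omega, ?_⟩
    have h4 := psum_cons (-1) τ 0
    rw [psum_zero] at h4
    omega

def hitAt {n : ℕ} (a : ℕ) (σ : Fin n → ℤ) : Prop :=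
  psum σ a = -1 ∧ ∀ k < a, psum σ k ≠ -1

lemma hitAt_unique {n : ℕ} {a a' : ℕ} {σ : Fin n → ℤ}
    (h : hitAt a σ) (h' : hitAt a' σ) : a = a' := by
  rcases lt_trichotomy a a' with hlt | he | hgt
  · exact absurd h.1 (h'.2 a hlt)
  · exact he
  · exact absurd h'.1 (h.2 a' hgt)

lemma exists_hitAt {n : ℕ} {σ : Fin n → ℤ} (hσ : ∀ (k : ℕ) (h : k < n), -1 ≤ σ ⟨k, h⟩)
    (hDD : condDD n σ) : ∃ a, a ≤ n ∧ hitAt a σ := by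
  have hex : ∃ k, psum σ k ≤ -1 := ⟨n, by rw [hDD.2]; omega⟩
  classical
  set a := Nat.find hex with ha
  have hspec : psum σ a ≤ -1 := Nat.find_spec hex
  have hmin : ∀ k < a, ¬ psum σ k ≤ -1 := fun k hk => Nat.find_min hex hk
  have ha0 : a ≠ 0 := by
    intro h; rw [h, psum_zero] at hspec; omega
  have han : a ≤ n := by
    by_contra hc
    have : psum σ a = psum σ n := psum_ge σ (by omega)
    have := hmin n (by omega)
    rw [hDD.2] at this; omega
  have hlt : a - 1 < n := by omega
  have hstep : psum σ (a - 1 + 1) = psum σ (a - 1) + σ ⟨a - 1, hlt⟩ := psum_succ σ hlt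
  rw [show a - 1 + 1 = a by omega] at hstep
  have hprev := hmin (a - 1) (by omega)
  have hval : psum σ a = -1 := by have := hσ (a - 1) hlt; omega
  exact ⟨a, han, hval, fun k hk => by have := hmin k hk; omega⟩

lemma condDD_append_iff {a b : ℕ} (τ1 : Fin a → ℤ) (τ2 : Fin b → ℤ) :
    (condDD (a + b) (Fin.append τ1 τ2) ∧ hitAt a (Fin.append τ1 τ2)) ↔
      (condD a τ1 ∧ condD b τ2) := by
  constructor
  · rintro ⟨⟨hint, htot⟩, hhit1, hhit2⟩
    have hb : b ≠ 0 := by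
      rintro rfl
      have h5 := psum_append_ge τ1 τ2 0
      rw [psum_zero] at h5
      have h6 := psum_append_le τ1 τ2 (le_refl a)
      omega
    refine ⟨⟨fun k hk1 hk2 => ?_, ?_⟩, fun k hk1 hk2 => ?_, ?_⟩
    · rw [← psum_append_le τ1 τ2 (show k ≤ a by omega)]
      have h1 := hint k hk1 (by omega)
      have h2 := hhit2 k (by omega)
      omega
    · rw [← psum_append_le τ1 τ2 le_rfl]; exact hhit1
    · have he : psum (Fin.append τ1 τ2) (a + k) = psum τ1 a + psum τ2 k :=
        psum_append_ge τ1 τ2 k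
      rw [psum_append_le τ1 τ2 le_rfl] at hhit1
      rw [hhit1] at he
      have := hint (a + k) (by omega) (by omega)
      omega
    · have he : psum (Fin.append τ1 τ2) (a + b) = psum τ1 a + psum τ2 b :=
        psum_append_ge τ1 τ2 b
      rw [psum_append_le τ1 τ2 le_rfl] at hhit1
      omega
  · rintro ⟨⟨h11, h12⟩, h21, h22⟩
    have ha0 : a ≠ 0 := by
      rintro rfl; rw [psum_zero] at h12; omega
    have hb0 : b ≠ 0 := by
      rintro rfl; rw [psum_zero] at h22; omega
    have hknow : ∀ k ≤ a, psum (Fin.append τ1 τ2) k = psum τ1 k :=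
      fun k hk => psum_append_le τ1 τ2 hk
    have hknow2 : ∀ m, psum (Fin.append τ1 τ2) (a + m) = psum τ1 a + psum τ2 m :=
      psum_append_ge τ1 τ2
    refine ⟨⟨fun k hk1 hk2 => ?_, ?_⟩, ?_, fun k hk => ?_⟩
    · by_cases hka : k ≤ a
      · rw [hknow k hka]
        rcases Nat.lt_or_ge k a with hlt | hge
        · have := h11 k hk1 (by omega); omega
        · have : k = a := by omega
          rw [this, h12]
      · obtain ⟨m, rfl⟩ : ∃ m, k = a + m := ⟨k - a, by omega⟩
        rw [hknow2 m, h12]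
        rcases Nat.eq_zero_or_pos m with rfl | hm
        · rw [psum_zero]; omega
        · have := h21 m (by omega) (by omega); omega
    · rw [hknow2 b, h12, h22]; ring
    · rw [hknow a le_rfl, h12]
    · rw [hknow k (by omega)]
      rcases Nat.eq_zero_or_pos k with rfl | hk0
      · rw [psum_zero]; omega
      · have := h11 k (by omega) (by omega); omega

lemma comp_append {α β : Type*} {a b : ℕ} (g : α → β) (u : Fin a → α) (v : Fin b → α) :
    (fun i => g (Fin.append u v i)) = Fin.append (g ∘ u) (g ∘ v) := by
  funext i
  induction i using Fin.addCases with
  | left i => simp [Fin.append_left]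
  | right i => simp [Fin.append_right]

lemma mem_Hs_entries (x : {t : ℤ // t ∈ Hs}) : -1 ≤ (x : ℤ) ∧ (x : ℤ) ≤ 1 := by
  have h := x.2
  simp only [Hs, Finset.mem_insert, Finset.mem_singleton] at h
  rcases h with h | h | h <;> rw [h] <;> omega

lemma gps_condDD {K : Type*} [Field K] {s0 : ℕ}
    (M : ℤ → ℤ → Matrix (Fin s0) (Fin s0) K) (z : K) (n : ℕ) :
    gps s0 M z n (condDD n) = ∑ p ∈ Finset.HasAntidiagonal.antidiagonal n,
      gps s0 M z p.1 (condD p.1) * gps s0 M z p.2 (condD p.2) := by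
  classical
  rw [gps]
  have step1 : ∀ σ : Fin n → {x : ℤ // x ∈ Hs},
      (if condDD n (fun k => (σ k : ℤ)) then
          (List.ofFn fun k : Fin n => gAstar s0 M z (σ k : ℤ)).prod else 0)
        = ∑ p ∈ Finset.HasAntidiagonal.antidiagonal n,
          (if condDD n (fun k => (σ k : ℤ)) ∧ hitAt p.1 (fun k => (σ k : ℤ)) then
            (List.ofFn fun k : Fin n => gAstar s0 M z (σ k : ℤ)).prod else 0) := by
    intro σ
    by_cases hc : condDD n (fun k => (σ k : ℤ))
    · obtain ⟨a, han, hhit⟩ := exists_hitAt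
        (fun k hk => (mem_Hs_entries (σ ⟨k, hk⟩)).1) hc
      rw [Finset.sum_eq_single_of_mem (a, n - a)
        (Finset.HasAntidiagonal.mem_antidiagonal.mpr (by omega))]
      · rw [if_pos hc, if_pos (show _ ∧ _ from ⟨hc, hhit⟩)]
      · intro p hp hne
        rw [if_neg]
        rintro ⟨-, hhitp⟩
        have h1 : p.1 = a := hitAt_unique hhitp hhit
        have h2 := Finset.HasAntidiagonal.mem_antidiagonal.mp hp
        exact hne (Prod.ext h1 (by omega))
    · rw [if_neg hc, Finset.sum_eq_zero fun p _ => if_neg (fun h => hc h.1)]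
  rw [Finset.sum_congr rfl fun σ _ => step1 σ, Finset.sum_comm]
  refine Finset.sum_congr rfl fun p hp => ?_
  obtain ⟨a, b⟩ := p
  have hab : a + b = n := Finset.HasAntidiagonal.mem_antidiagonal.mp hp
  subst hab
  refine ((Equiv.sum_comp (Fin.appendEquiv (α := {x : ℤ // x ∈ Hs}) a b) _).symm).trans ?_
  rw [Fintype.sum_prod_type, gps, gps, Finset.sum_mul_sum]
  refine Finset.sum_congr rfl fun τ1 _ => Finset.sum_congr rfl fun τ2 _ => ?_
  have happ : Fin.appendEquiv (α := {x : ℤ // x ∈ Hs}) a b (τ1, τ2) = Fin.append τ1 τ2 := rfl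
  rw [happ]
  have hcoe : (fun k => ((Fin.append τ1 τ2) k : ℤ))
      = Fin.append (fun k => (τ1 k : ℤ)) (fun k => (τ2 k : ℤ)) :=
    comp_append (Subtype.val) τ1 τ2
  have hw : (fun k : Fin (a + b) => gAstar s0 M z ((Fin.append τ1 τ2) k : ℤ))
      = Fin.append (fun k : Fin a => gAstar s0 M z (τ1 k : ℤ))
          (fun k : Fin b => gAstar s0 M z (τ2 k : ℤ)) :=
    comp_append (fun (x : {x : ℤ // x ∈ Hs}) => gAstar s0 M z (x : ℤ)) τ1 τ2
  rw [hcoe, hw, List.ofFn_fin_append, List.prod_append]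
  rw [if_congr (condDD_append_iff _ _) rfl rfl]
  by_cases h1 : condD a (fun k => (τ1 k : ℤ)) <;>
    by_cases h2 : condD b (fun k => (τ2 k : ℤ)) <;>
    simp [h1, h2]

lemma condD_zero_false (σ : Fin 0 → ℤ) : ¬ condD 0 σ := by
  rintro ⟨-, h⟩
  rw [psum_zero] at h
  omega

lemma gps_condD_zero {K : Type*} [Field K] {s0 : ℕ}
    (M : ℤ → ℤ → Matrix (Fin s0) (Fin s0) K) (z : K) :
    gps s0 M z 0 (condD 0) = 0 :=
  gps_false fun σ => condD_zero_false σ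

lemma gps_recD {K : Type*} [Field K] {s0 : ℕ}
    (M : ℤ → ℤ → Matrix (Fin s0) (Fin s0) K) (z : K) (n : ℕ) :
    gps s0 M z (n+1) (condD (n+1)) =
      (if n = 0 then gAstar s0 M z (-1) else 0)
        + gAstar s0 M z 0 * gps s0 M z n (condD n)
        + gAstar s0 M z 1 * ∑ p ∈ Finset.HasAntidiagonal.antidiagonal n,
            gps s0 M z p.1 (condD p.1) * gps s0 M z p.2 (condD p.2) := by
  rw [gps_succ, sum_Hs_subtype (fun i => gAstar s0 M z i
    * gps s0 M z n (fun τ => condD (n+1) (Fin.cons i τ)))]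
  congr 1
  · congr 1
    · -- i = -1 term
      rw [gps_congr (fun σ => condD_cons_negone σ)]
      rcases Nat.eq_zero_or_pos n with rfl | hn
      · rw [gps_zero, if_pos rfl, if_pos rfl, mul_one]
      · rw [gps_false (fun σ => by omega), if_neg (by omega), mul_zero]
    · -- i = 0 term
      rw [gps_congr (fun σ => condD_cons_zero σ)]
  · -- i = 1 term
    rw [gps_congr (fun σ => condD_cons_one σ), gps_condDD]

lemma mem_Hs_iff (x : ℤ) : x ∈ Hs ↔ -1 ≤ x ∧ x ≤ 1 := by
  simp only [Hs, Finset.mem_insert, Finset.mem_singleton]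
  omega

lemma psum_revneg {n : ℕ} (σ : Fin n → ℤ) {k : ℕ} (hk : k ≤ n) :
    psum (fun j : Fin n => -σ (Fin.rev j)) k = psum σ (n - k) - psum σ n := by
  rw [psum_eq_sum_ite, psum_eq_sum_ite, psum_eq_sum_ite]
  have h1 : ∑ j : Fin n, (if (j : ℕ) < k then -σ (Fin.rev j) else 0)
      = ∑ j : Fin n, (if ((Fin.rev j : Fin n) : ℕ) < k then -σ (Fin.rev (Fin.rev j)) else 0) :=
    (Equiv.sum_comp Fin.revPerm
      (fun j => if ((j : Fin n) : ℕ) < k then -σ (Fin.rev j) else 0)).symm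
  rw [h1]
  have h2 : ∀ j : Fin n, (if ((Fin.rev j : Fin n) : ℕ) < k then -σ (Fin.rev (Fin.rev j)) else 0)
      = -(if n - k ≤ (j : ℕ) then σ j else 0) := by
    intro j
    rw [Fin.rev_rev]
    have hv : ((Fin.rev j : Fin n) : ℕ) = n - 1 - (j : ℕ) := by rw [Fin.val_rev]; omega
    by_cases h : n - k ≤ (j : ℕ)
    · rw [if_pos (by rw [hv]; have := j.isLt; omega), if_pos h]
    · rw [if_neg (by rw [hv]; have := j.isLt; omega), if_neg h, neg_zero]
  rw [Finset.sum_congr rfl fun j _ => h2 j]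
  have hneg : ∑ j : Fin n, -(if n - k ≤ (j : ℕ) then σ j else 0)
      = -∑ j : Fin n, (if n - k ≤ (j : ℕ) then σ j else 0) := by
    simp
  have key : ∑ j : Fin n, ((if (j : ℕ) < n - k then σ j else 0)
      + (if n - k ≤ (j : ℕ) then σ j else 0)) = ∑ j : Fin n, (if (j : ℕ) < n then σ j else 0) := by
    refine Finset.sum_congr rfl fun j _ => ?_
    rcases Nat.lt_or_ge (j : ℕ) (n - k) with h | h
    · rw [if_pos h, if_neg (by omega), if_pos j.isLt]; ring
    · rw [if_neg (by omega), if_pos h, if_pos j.isLt]; ring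
  rw [Finset.sum_add_distrib] at key
  omega

lemma condU_rev {n : ℕ} (σ : Fin n → ℤ) :
    condD n (fun k => -σ (Fin.rev k)) ↔ condU n σ := by
  constructor
  · rintro ⟨h1, h2⟩
    rw [psum_revneg σ le_rfl, Nat.sub_self, psum_zero] at h2
    refine ⟨fun k hk1 hk2 => ?_, by omega⟩
    have h3 := h1 (n - k) (by omega) (by omega)
    rw [psum_revneg σ (by omega), show n - (n - k) = k by omega] at h3
    omega
  · rintro ⟨h1, h2⟩
    refine ⟨fun k hk1 hk2 => ?_, ?_⟩
    · rw [psum_revneg σ (by omega)]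
      have h3 := h1 (n - k) (by omega) (by omega)
      omega
    · rw [psum_revneg σ le_rfl, Nat.sub_self, psum_zero]
      omega

def negRev {n : ℕ} : (Fin n → {x : ℤ // x ∈ Hs}) ≃ (Fin n → {x : ℤ // x ∈ Hs}) where
  toFun σ := fun k => ⟨-(σ (Fin.rev k) : ℤ), by
    rw [mem_Hs_iff]
    have := mem_Hs_entries (σ (Fin.rev k))
    omega⟩
  invFun σ := fun k => ⟨-(σ (Fin.rev k) : ℤ), by
    rw [mem_Hs_iff]
    have := mem_Hs_entries (σ (Fin.rev k))
    omega⟩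
  left_inv σ := funext fun k => Subtype.ext (by simp [Fin.rev_rev])
  right_inv σ := funext fun k => Subtype.ext (by simp [Fin.rev_rev])

lemma ofFn_rev' {α : Type*} {n : ℕ} (f : Fin n → α) :
    List.ofFn (fun k : Fin n => f (Fin.rev k)) = (List.ofFn f).reverse := by
  refine List.ext_getElem (by simp) ?_
  intro i h1 h2
  simp only [List.getElem_ofFn, List.getElem_reverse, List.length_ofFn] at *
  congr 1
  rw [Fin.ext_iff]
  simp [Fin.rev]
  omega

open Matrix in
lemma gAstar_neg_transpose {K : Type*} [Field K] {s0 : ℕ}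
    (M : ℤ → ℤ → Matrix (Fin s0) (Fin s0) K) (z : K) (i : ℤ) :
    gAstar s0 (fun p q => (M p (-q))ᵀ) z i = (gAstar s0 M z (-i))ᵀ := by
  rw [gAstar, gAstar, Matrix.transpose_sum]
  exact Finset.sum_congr rfl fun j _ => (Matrix.transpose_smul _ _).symm

open Matrix in
lemma gps_rev {K : Type*} [Field K] {s0 : ℕ}
    (M : ℤ → ℤ → Matrix (Fin s0) (Fin s0) K) (z : K) (n : ℕ) :
    gps s0 M z n (condU n) = (gps s0 (fun p q => (M p (-q))ᵀ) z n (condD n))ᵀ := by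
  classical
  have h1 : ∀ σ : Fin n → {x : ℤ // x ∈ Hs},
      (if condD n (fun k => ((negRev σ) k : ℤ)) then
        (List.ofFn fun k : Fin n =>
          gAstar s0 (fun p q => (M p (-q))ᵀ) z ((negRev σ) k : ℤ)).prod else 0)ᵀ
      = (if condU n (fun k => (σ k : ℤ)) then
          (List.ofFn fun k : Fin n => gAstar s0 M z (σ k : ℤ)).prod else 0) := by
    intro σ
    rw [apply_ite Matrix.transpose, Matrix.transpose_zero]
    refine if_congr (condU_rev (fun k => (σ k : ℤ))) ?_ rfl
    have hg : ∀ k : Fin n, gAstar s0 (fun p q => (M p (-q))ᵀ) z ((negRev σ) k : ℤ)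
        = (gAstar s0 M z ((σ (Fin.rev k)) : ℤ))ᵀ := by
      intro k
      rw [show ((negRev σ) k : ℤ) = -((σ (Fin.rev k)) : ℤ) from rfl, gAstar_neg_transpose, neg_neg]
    simp only [hg]
    have hmap : (List.ofFn fun k : Fin n => (gAstar s0 M z ((σ (Fin.rev k)) : ℤ))ᵀ)
        = (List.ofFn fun k : Fin n => gAstar s0 M z ((σ (Fin.rev k)) : ℤ)).map
            Matrix.transpose := by
      rw [List.map_ofFn]
      rfl
    rw [hmap]
    rw [Matrix.transpose_list_prod, List.map_map]
    simp only [Function.comp_def, Matrix.transpose_transpose]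
    rw [show (List.map (fun a => a) (List.ofFn fun k : Fin n
        => gAstar s0 M z ((σ (Fin.rev k)) : ℤ))) = _ from List.map_id _]
    rw [ofFn_rev' (fun k : Fin n => gAstar s0 M z ((σ k : ℤ))), List.reverse_reverse]
  rw [gps, gps, Matrix.transpose_sum]
  rw [Finset.sum_congr rfl fun σ _ => (h1 σ).symm]
  exact Equiv.sum_comp negRev (fun τ : Fin n → {x : ℤ // x ∈ Hs} =>
    (if condD n (fun k => (τ k : ℤ)) then
      (List.ofFn fun k : Fin n => gAstar s0 (fun p q => (M p (-q))ᵀ) z (τ k : ℤ)).prod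
    else 0)ᵀ)


lemma AstarC_eq_gAstar (A : ℤ → ℤ → Matrix (Fin s0) (Fin s0) ℝ) (z : ℂ) :
    AstarC s0 A z = gAstar s0 (fun p q => (A p q).map Complex.ofReal) z := rfl

lemma AstarR_eq_gAstar (A : ℤ → ℤ → Matrix (Fin s0) (Fin s0) ℝ) (z : ℝ) :
    AstarR s0 A z = gAstar s0 A z := rfl

lemma astarR_nonneg {A : ℤ → ℤ → Matrix (Fin s0) (Fin s0) ℝ}
    (hAnn : ∀ i j : ℤ, ∀ k l, 0 ≤ A i j k l) {w : ℝ} (hw : 0 < w) (i : ℤ) (k l : Fin s0) :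
    0 ≤ AstarR s0 A w i k l := by
  rw [AstarR, Matrix.sum_apply]
  refine Finset.sum_nonneg fun j _ => ?_
  rw [Matrix.smul_apply, smul_eq_mul]
  exact mul_nonneg (zpow_pos hw j).le (hAnn j i k l)

lemma abs_astarC_le {A : ℤ → ℤ → Matrix (Fin s0) (Fin s0) ℝ}
    (hAnn : ∀ i j : ℤ, ∀ k l, 0 ≤ A i j k l) (z : ℂ) (i : ℤ) (k l : Fin s0) :
    ‖AstarC s0 A z i k l‖ ≤ AstarR s0 A ‖z‖ i k l := by
  rw [AstarC, AstarR, Matrix.sum_apply, Matrix.sum_apply]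
  refine (norm_sum_le _ _).trans (le_of_eq (Finset.sum_congr rfl fun j _ => ?_))
  rw [Matrix.smul_apply, Matrix.smul_apply, smul_eq_mul, smul_eq_mul, norm_mul,
    norm_zpow, Matrix.map_apply, Complex.norm_real, Real.norm_eq_abs, abs_of_nonneg (hAnn j i k l)]

lemma listprodR_nonneg {A : ℤ → ℤ → Matrix (Fin s0) (Fin s0) ℝ}
    (hAnn : ∀ i j : ℤ, ∀ k l, 0 ≤ A i j k l) {w : ℝ} (hw : 0 < w) (L : List ℤ) (k l : Fin s0) :
    0 ≤ ((L.map (AstarR s0 A w)).prod) k l := by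
  induction L generalizing k l with
  | nil =>
    simp only [List.map_nil, List.prod_nil, Matrix.one_apply]
    split <;> norm_num
  | cons a L ih =>
    rw [List.map_cons, List.prod_cons, Matrix.mul_apply]
    exact Finset.sum_nonneg fun m _ => mul_nonneg (astarR_nonneg hAnn hw a k m) (ih m l)

lemma listprod_abs_le {A : ℤ → ℤ → Matrix (Fin s0) (Fin s0) ℝ}
    (hAnn : ∀ i j : ℤ, ∀ k l, 0 ≤ A i j k l) {z : ℂ} (hz : z ≠ 0) (L : List ℤ) (k l : Fin s0) :
    ‖(((L.map (AstarC s0 A z)).prod) k l)‖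
      ≤ ((L.map (AstarR s0 A ‖z‖)).prod) k l := by
  have hw : 0 < ‖z‖ := norm_pos_iff.mpr hz
  induction L generalizing k l with
  | nil =>
    simp only [List.map_nil, List.prod_nil, Matrix.one_apply]
    split <;> simp
  | cons a L ih =>
    rw [List.map_cons, List.prod_cons, List.map_cons, List.prod_cons,
      Matrix.mul_apply, Matrix.mul_apply]
    refine (norm_sum_le _ _).trans (Finset.sum_le_sum fun m _ => ?_)
    rw [norm_mul]
    exact mul_le_mul (abs_astarC_le hAnn z a k m) (ih m l) (norm_nonneg _)
      (astarR_nonneg hAnn hw a k m)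



lemma pathSumC_eq_gps (A : ℤ → ℤ → Matrix (Fin s0) (Fin s0) ℝ) (z : ℂ) (n : ℕ)
    (cond : (Fin n → ℤ) → Prop) :
    pathSumC s0 A z n cond = gps s0 (fun p q => (A p q).map Complex.ofReal) z n cond := rfl

lemma pathSumR_eq_gps (A : ℤ → ℤ → Matrix (Fin s0) (Fin s0) ℝ) (z : ℝ) (n : ℕ)
    (cond : (Fin n → ℤ) → Prop) :
    pathSumR s0 A z n cond = gps s0 A z n cond := rfl

lemma AstarC_eq_gAstar' (A : ℤ → ℤ → Matrix (Fin s0) (Fin s0) ℝ) (z : ℂ) (i : ℤ) :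
    AstarC s0 A z i = gAstar s0 (fun p q => (A p q).map Complex.ofReal) z i := rfl

lemma DmatC_zero (A : ℤ → ℤ → Matrix (Fin s0) (Fin s0) ℝ) (z : ℂ) :
    DmatC s0 A z 0 = 0 := by
  rw [DmatC, pathSumC_eq_gps]
  exact gps_false fun σ => condD_zero_false σ

lemma recD_C (A : ℤ → ℤ → Matrix (Fin s0) (Fin s0) ℝ) (z : ℂ) (n : ℕ) :
    DmatC s0 A z (n+1) =
      (if n = 0 then AstarC s0 A z (-1) else 0)
        + AstarC s0 A z 0 * DmatC s0 A z n
        + AstarC s0 A z 1 * ∑ p ∈ Finset.HasAntidiagonal.antidiagonal n,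
            DmatC s0 A z p.1 * DmatC s0 A z p.2 := by
  simp only [DmatC, pathSumC_eq_gps, AstarC_eq_gAstar']
  exact gps_recD _ z n

lemma abs_DmatC_le {A : ℤ → ℤ → Matrix (Fin s0) (Fin s0) ℝ}
    (hAnn : ∀ i j : ℤ, ∀ k l, 0 ≤ A i j k l) {z : ℂ} (hz : z ≠ 0) (n : ℕ) (i j : Fin s0) :
    ‖DmatC s0 A z n i j‖ ≤ DmatR s0 A ‖z‖ n i j := by
  rw [DmatC, DmatR, pathSumC, pathSumR, Matrix.sum_apply, Matrix.sum_apply]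
  refine (norm_sum_le _ _).trans (Finset.sum_le_sum fun σ _ => ?_)
  rw [apply_ite (fun m : Matrix (Fin s0) (Fin s0) ℂ => m i j),
    apply_ite (fun m : Matrix (Fin s0) (Fin s0) ℝ => m i j), Matrix.zero_apply, Matrix.zero_apply]
  split
  · have hC : (List.ofFn fun k => AstarC s0 A z (σ k : ℤ))
        = (List.ofFn fun k => (σ k : ℤ)).map (AstarC s0 A z) :=
      (List.map_ofFn (f := fun k : Fin n => ((σ k : ℤ))) (g := AstarC s0 A z)).symm
    have hR : (List.ofFn fun k => AstarR s0 A ‖z‖ (σ k : ℤ))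
        = (List.ofFn fun k => (σ k : ℤ)).map (AstarR s0 A ‖z‖) :=
      (List.map_ofFn (f := fun k : Fin n => ((σ k : ℤ))) (g := AstarR s0 A ‖z‖)).symm
    rw [hC, hR]
    exact listprod_abs_le hAnn hz _ i j
  · simp

lemma eq1C (A : ℤ → ℤ → Matrix (Fin s0) (Fin s0) ℝ)
    (hAnn : ∀ i j : ℤ, ∀ k l, 0 ≤ A i j k l) {z : ℂ} (hz : z ≠ 0)
    (hG : ∀ i j, Summable fun n : ℕ => DmatR s0 A ‖z‖ n i j) :
    AstarC s0 A z (-1) + AstarC s0 A z 0 * G1C s0 A z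
      + AstarC s0 A z 1 * (G1C s0 A z * G1C s0 A z) = G1C s0 A z := by
  have hnorm : ∀ i j, Summable fun n : ℕ => ‖DmatC s0 A z n i j‖ := by
    intro i j
    refine Summable.of_nonneg_of_le (fun n => norm_nonneg _) (fun n => ?_) (hG i j)
    exact abs_DmatC_le hAnn hz n i j
  have hsum : ∀ i j, Summable fun n : ℕ => DmatC s0 A z n i j :=
    fun i j => (hnorm i j).of_norm
  have hG1 : ∀ i j, G1C s0 A z i j = ∑' n : ℕ, DmatC s0 A z n i j := fun i j => rfl
  have hterm : ∀ (n : ℕ) (i j : Fin s0), DmatC s0 A z (n+1) i j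
      = (if n = 0 then AstarC s0 A z (-1) i j else 0)
        + (AstarC s0 A z 0 * DmatC s0 A z n) i j
        + (AstarC s0 A z 1 * ∑ p ∈ Finset.HasAntidiagonal.antidiagonal n,
            DmatC s0 A z p.1 * DmatC s0 A z p.2) i j := by
    intro n i j
    rw [recD_C A z n]
    rw [Matrix.add_apply, Matrix.add_apply,
      apply_ite (fun m : Matrix (Fin s0) (Fin s0) ℂ => m i j), Matrix.zero_apply]
  -- summability of the three pieces
  have s1 : ∀ i j, Summable fun n : ℕ => if n = 0 then AstarC s0 A z (-1) i j else 0 := by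
    intro i j
    refine summable_of_ne_finset_zero (s := {0}) fun n hn => ?_
    rw [if_neg (by simpa using hn)]
  have s2 : ∀ i j, Summable fun n : ℕ => (AstarC s0 A z 0 * DmatC s0 A z n) i j := by
    intro i j
    have : (fun n : ℕ => (AstarC s0 A z 0 * DmatC s0 A z n) i j)
        = fun n : ℕ => ∑ k, AstarC s0 A z 0 i k * DmatC s0 A z n k j := by
      funext n; rw [Matrix.mul_apply]
    rw [this]
    exact summable_sum fun k _ => (hsum k j).mul_left _
  have hcauchy : ∀ k l j : Fin s0, Summable fun n : ℕ =>
      ∑ p ∈ Finset.HasAntidiagonal.antidiagonal n, DmatC s0 A z p.1 k l * DmatC s0 A z p.2 l j := by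
    intro k l j
    exact (summable_norm_sum_mul_antidiagonal_of_summable_norm (hnorm k l) (hnorm l j)).of_norm
  have hSentry : ∀ (n : ℕ) (k j : Fin s0),
      (∑ p ∈ Finset.HasAntidiagonal.antidiagonal n, DmatC s0 A z p.1 * DmatC s0 A z p.2) k j
        = ∑ l, ∑ p ∈ Finset.HasAntidiagonal.antidiagonal n, DmatC s0 A z p.1 k l * DmatC s0 A z p.2 l j := by
    intro n k j
    rw [Matrix.sum_apply]
    rw [Finset.sum_congr rfl fun p _ => Matrix.mul_apply]
    exact Finset.sum_comm
  have sS : ∀ k j : Fin s0, Summable fun n : ℕ =>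
      (∑ p ∈ Finset.HasAntidiagonal.antidiagonal n, DmatC s0 A z p.1 * DmatC s0 A z p.2) k j := by
    intro k j
    have : (fun n : ℕ => (∑ p ∈ Finset.HasAntidiagonal.antidiagonal n, DmatC s0 A z p.1 * DmatC s0 A z p.2) k j)
        = fun n : ℕ => ∑ l, ∑ p ∈ Finset.HasAntidiagonal.antidiagonal n,
            DmatC s0 A z p.1 k l * DmatC s0 A z p.2 l j := by
      funext n; exact hSentry n k j
    rw [this]
    exact summable_sum fun l _ => hcauchy k l j
  have hSval : ∀ k j : Fin s0,
      (∑' n : ℕ, (∑ p ∈ Finset.HasAntidiagonal.antidiagonal n, DmatC s0 A z p.1 * DmatC s0 A z p.2) k j)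
        = (G1C s0 A z * G1C s0 A z) k j := by
    intro k j
    rw [tsum_congr fun n => hSentry n k j, Summable.tsum_finsetSum fun l _ => hcauchy k l j, Matrix.mul_apply]
    refine Finset.sum_congr rfl fun l _ => ?_
    rw [hG1 k l, hG1 l j]
    exact (tsum_mul_tsum_eq_tsum_sum_antidiagonal_of_summable_norm
      (hnorm k l) (hnorm l j)).symm
  have s3 : ∀ i j, Summable fun n : ℕ =>
      (AstarC s0 A z 1 * ∑ p ∈ Finset.HasAntidiagonal.antidiagonal n,
        DmatC s0 A z p.1 * DmatC s0 A z p.2) i j := by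
    intro i j
    have : (fun n : ℕ => (AstarC s0 A z 1 * ∑ p ∈ Finset.HasAntidiagonal.antidiagonal n,
          DmatC s0 A z p.1 * DmatC s0 A z p.2) i j)
        = fun n : ℕ => ∑ k, AstarC s0 A z 1 i k
            * (∑ p ∈ Finset.HasAntidiagonal.antidiagonal n, DmatC s0 A z p.1 * DmatC s0 A z p.2) k j := by
      funext n; rw [Matrix.mul_apply]
    rw [this]
    exact summable_sum fun k _ => (sS k j).mul_left _
  -- main computation
  ext i j
  rw [Matrix.add_apply, Matrix.add_apply]
  rw [hG1 i j, Summable.tsum_eq_zero_add (hsum i j), DmatC_zero A z, Matrix.zero_apply, zero_add]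
  rw [tsum_congr fun n => hterm n i j]
  rw [Summable.tsum_add ((s1 i j).add (s2 i j)) (s3 i j), Summable.tsum_add (s1 i j) (s2 i j)]
  have T1 : (∑' n : ℕ, if n = 0 then AstarC s0 A z (-1) i j else 0)
      = AstarC s0 A z (-1) i j := by
    rw [tsum_eq_single 0 fun n hn => if_neg hn]
    rw [if_pos rfl]
  have T2 : (∑' n : ℕ, (AstarC s0 A z 0 * DmatC s0 A z n) i j)
      = (AstarC s0 A z 0 * G1C s0 A z) i j := by
    rw [tsum_congr fun n : ℕ => (Matrix.mul_apply :
        (AstarC s0 A z 0 * DmatC s0 A z n) i j = _)]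
    rw [Summable.tsum_finsetSum fun k _ => (hsum k j).mul_left _, Matrix.mul_apply]
    refine Finset.sum_congr rfl fun k _ => ?_
    rw [tsum_mul_left, hG1 k j]
  have T3 : (∑' n : ℕ, (AstarC s0 A z 1 * ∑ p ∈ Finset.HasAntidiagonal.antidiagonal n,
        DmatC s0 A z p.1 * DmatC s0 A z p.2) i j)
      = (AstarC s0 A z 1 * (G1C s0 A z * G1C s0 A z)) i j := by
    rw [tsum_congr fun n : ℕ => (Matrix.mul_apply :
        (AstarC s0 A z 1 * ∑ p ∈ Finset.HasAntidiagonal.antidiagonal n,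
          DmatC s0 A z p.1 * DmatC s0 A z p.2) i j = _)]
    rw [Summable.tsum_finsetSum fun k _ => (sS k j).mul_left _, Matrix.mul_apply]
    refine Finset.sum_congr rfl fun k _ => ?_
    rw [tsum_mul_left, hSval k j]
  rw [T1, T2, T3]

open Matrix in
lemma UmatC_eq_transpose (A : ℤ → ℤ → Matrix (Fin s0) (Fin s0) ℝ) (z : ℂ) (n : ℕ) :
    UmatC s0 A z n = (DmatC s0 (fun p q => (A p (-q))ᵀ) z n)ᵀ := by
  rw [UmatC, DmatC, pathSumC_eq_gps, pathSumC_eq_gps, gps_rev]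
  have hF : (fun p q => (((A p (-q)).map Complex.ofReal)ᵀ : Matrix (Fin s0) (Fin s0) ℂ))
      = fun p q => ((A p (-q))ᵀ).map Complex.ofReal := by
    funext p q
    exact (Matrix.transpose_map).symm
  rw [hF]

open Matrix in
lemma UmatR_eq_transpose (A : ℤ → ℤ → Matrix (Fin s0) (Fin s0) ℝ) (w : ℝ) (n : ℕ) :
    UmatR s0 A w n = (DmatR s0 (fun p q => (A p (-q))ᵀ) w n)ᵀ := by
  rw [UmatR, DmatR, pathSumR_eq_gps, pathSumR_eq_gps, gps_rev]

open Matrix in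
lemma R1C_eq_transpose (A : ℤ → ℤ → Matrix (Fin s0) (Fin s0) ℝ) (z : ℂ) :
    R1C s0 A z = (G1C s0 (fun p q => (A p (-q))ᵀ) z)ᵀ := by
  ext i j
  show (∑' n : ℕ, UmatC s0 A z n i j) = ∑' n : ℕ, DmatC s0 (fun p q => (A p (-q))ᵀ) z n j i
  exact tsum_congr fun n => by rw [UmatC_eq_transpose]; rfl

open Matrix in
lemma AstarC_B (A : ℤ → ℤ → Matrix (Fin s0) (Fin s0) ℝ) (z : ℂ) (i : ℤ) :
    AstarC s0 (fun p q => (A p (-q))ᵀ) z i = (AstarC s0 A z (-i))ᵀ := by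
  rw [AstarC_eq_gAstar', AstarC_eq_gAstar']
  have hF : (fun p q => (((fun p q => (A p (-q))ᵀ) p q).map Complex.ofReal))
      = fun p q => (((A p (-q)).map Complex.ofReal))ᵀ := by
    funext p q
    exact Matrix.transpose_map
  rw [hF]
  exact gAstar_neg_transpose (fun p q => (A p q).map Complex.ofReal) z i

end auxmine

end QBDSeries

open QBDSeries in
/-- the matrix quadratic equations satisfied by `G1(z)` and `R1(z)`. -/
theorem statement8
    (s0 : ℕ) (hs0 : 1 ≤ s0)
    (A : ℤ → ℤ → Matrix (Fin s0) (Fin s0) ℝ)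
    (hAsupp : ∀ i j : ℤ, ¬(i ∈ Hs ∧ j ∈ Hs) → A i j = 0)
    (hAnn : ∀ i j : ℤ, ∀ k l, 0 ≤ A i j k l)
    (hAst : IsStochastic (∑ i ∈ Hs, ∑ j ∈ Hs, A i j))
    (z : ℂ) (hz : z ≠ 0)
    (hN : ∀ i j, Summable fun n : ℕ => QmatR s0 A ‖z‖ n i j)
    (hG : ∀ i j, Summable fun n : ℕ => DmatR s0 A ‖z‖ n i j)
    (hR : ∀ i j, Summable fun n : ℕ => UmatR s0 A ‖z‖ n i j) :
    AstarC s0 A z (-1) + AstarC s0 A z 0 * G1C s0 A z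
        + AstarC s0 A z 1 * (G1C s0 A z * G1C s0 A z) = G1C s0 A z ∧
    R1C s0 A z * R1C s0 A z * AstarC s0 A z (-1) + R1C s0 A z * AstarC s0 A z 0
        + AstarC s0 A z 1 = R1C s0 A z := by
  open Matrix in
  constructor
  · exact eq1C A hAnn hz hG
  · have hAnnB : ∀ i j : ℤ, ∀ k l, 0 ≤ (fun p q => (A p (-q))ᵀ) i j k l :=
      fun i j k l => hAnn i (-j) l k
    have hGB : ∀ i j, Summable fun n : ℕ =>
        DmatR s0 (fun p q => (A p (-q))ᵀ) ‖z‖ n i j := by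
      intro i j
      exact (hR j i).congr fun n => by rw [UmatR_eq_transpose]; rfl
    have h2 := eq1C (fun p q => (A p (-q))ᵀ) hAnnB hz hGB
    have hGBeq : G1C s0 (fun p q => (A p (-q))ᵀ) z = (R1C s0 A z)ᵀ := by
      rw [R1C_eq_transpose, Matrix.transpose_transpose]
    rw [hGBeq] at h2
    rw [AstarC_B A z (-1), AstarC_B A z 0, AstarC_B A z 1] at h2
    simp only [neg_neg, neg_zero] at h2
    have h3 := congrArg Matrix.transpose h2
    simp only [Matrix.transpose_add, Matrix.transpose_mul, Matrix.transpose_transpose] at h3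
    have hre : R1C s0 A z * R1C s0 A z * AstarC s0 A z (-1) + R1C s0 A z * AstarC s0 A z 0
        + AstarC s0 A z 1
        = AstarC s0 A z 1 + R1C s0 A z * AstarC s0 A z 0
          + R1C s0 A z * R1C s0 A z * AstarC s0 A z (-1) := by abel
    exact hre.trans h3
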